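/- Let U, H be integers with 2 ≤ U ≤ H+1, α = 1/U, and B*_{α,H} the Vaaler kernel with Fourier coefficients B̂*_{α,H}(h) = (1/(H+1))(1 - |h|/(H+1))cos(πhα) for |h| ≤ H and 0 otherwise. Then Σ_{0≤u<U} (B*_{α,H} ∗ B*_{α,H})(u/U) ≤ 1/(H+1). -/

import Mathlib

open intervalIntegral ComplexOrder

/-- Fourier coefficients of the Vaaler majorant kernel `B*_{α,H}`. -/
noncomputable def BStarHat (α : ℝ) (H : ℕ) (h : ℤ) : ℝ :=
  (1 / ((H : ℝ) + 1)) * (1 - |(h : ℝ)| / ((H : ℝ) + 1)) * Real.cos (Real.pi * h * α)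

/-- The Vaaler majorant kernel `B*_{α,H}(x) = Σ_{|h|≤H} B̂*_{α,H}(h) e(hx)`. -/
noncomputable def BStar (α : ℝ) (H : ℕ) (x : ℝ) : ℂ :=
  ∑ h ∈ Finset.Icc (-(H : ℤ)) (H : ℤ),
    (BStarHat α H h : ℂ) * Complex.exp (2 * Real.pi * Complex.I * h * x)

open Complex Real

lemma int_exp (m : ℤ) : (∫ t in (-(1/2):ℝ)..(1/2), Complex.exp (2*Real.pi*Complex.I*m*t))
    = if m = 0 then 1 else 0 := by
  rcases eq_or_ne m 0 with hm | hm
  · subst hm; norm_num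
  · rw [if_neg hm]
    have hc : (2*(Real.pi:ℂ)*Complex.I*m) ≠ 0 := by
      simp [Real.pi_ne_zero, Complex.I_ne_zero, hm]
    rw [integral_exp_mul_complex hc]
    have : Complex.exp (2*(Real.pi:ℂ)*Complex.I*m * ((1/2:ℝ):ℂ))
        = Complex.exp (2*(Real.pi:ℂ)*Complex.I*m * ((-(1/2):ℝ):ℂ)) := by
      have h1 : (2*(Real.pi:ℂ)*Complex.I*m * ((1/2:ℝ):ℂ))
          = 2*(Real.pi:ℂ)*Complex.I*m * ((-(1/2):ℝ):ℂ) + m * (2*Real.pi*Complex.I) := by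
        push_cast; ring
      rw [h1, Complex.exp_add, Complex.exp_int_mul_two_pi_mul_I m, mul_one]
    rw [this, sub_self, zero_div]

lemma conv_eq (α : ℝ) (H : ℕ) (x : ℝ) :
    (∫ t in (-(1/2):ℝ)..(1/2), BStar α H (x - t) * BStar α H t)
    = ∑ h ∈ Finset.Icc (-(H:ℤ)) (H:ℤ),
        ((BStarHat α H h : ℂ))^2 * Complex.exp (2*Real.pi*Complex.I*h*x) := by
  have key : ∀ t : ℝ, BStar α H (x - t) * BStar α H t
      = ∑ h ∈ Finset.Icc (-(H:ℤ)) (H:ℤ), ∑ h' ∈ Finset.Icc (-(H:ℤ)) (H:ℤ),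
          ((BStarHat α H h : ℂ) * (BStarHat α H h' : ℂ)
            * Complex.exp (2*Real.pi*Complex.I*h*x))
            * Complex.exp (2*Real.pi*Complex.I*(h'-h)*t) := by
    intro t
    rw [BStar, BStar, Finset.sum_mul_sum]
    refine Finset.sum_congr rfl fun h _ => Finset.sum_congr rfl fun h' _ => ?_
    have harg : (2*(Real.pi:ℂ)*Complex.I*h*((x - t : ℝ):ℂ)) + 2*Real.pi*Complex.I*h'*(t:ℂ)
        = 2*Real.pi*Complex.I*h*(x:ℂ) + 2*Real.pi*Complex.I*((h':ℂ)-(h:ℂ))*(t:ℂ) := by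
      push_cast; ring
    calc (BStarHat α H h : ℂ) * Complex.exp (2 * Real.pi * Complex.I * h * ((x - t:ℝ):ℂ))
          * ((BStarHat α H h' : ℂ) * Complex.exp (2 * Real.pi * Complex.I * h' * (t:ℂ)))
        = (BStarHat α H h : ℂ) * (BStarHat α H h' : ℂ)
          * Complex.exp ((2*(Real.pi:ℂ)*Complex.I*h*((x - t : ℝ):ℂ)) + 2*Real.pi*Complex.I*h'*(t:ℂ)) := by
          rw [Complex.exp_add]; ring
      _ = ((BStarHat α H h : ℂ) * (BStarHat α H h' : ℂ)
            * Complex.exp (2*Real.pi*Complex.I*h*(x:ℂ)))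
            * Complex.exp (2*Real.pi*Complex.I*((h':ℂ)-(h:ℂ))*(t:ℂ)) := by
          rw [harg, Complex.exp_add]; ring
  simp only [key]
  rw [intervalIntegral.integral_finset_sum]
  · refine Finset.sum_congr rfl fun h hmem => ?_
    rw [intervalIntegral.integral_finset_sum]
    · have : ∀ h' ∈ Finset.Icc (-(H:ℤ)) (H:ℤ),
          (∫ t in (-(1/2):ℝ)..(1/2),
            ((BStarHat α H h : ℂ) * (BStarHat α H h' : ℂ)
              * Complex.exp (2*Real.pi*Complex.I*h*x))
              * Complex.exp (2*Real.pi*Complex.I*(h'-h)*t))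
          = if h' = h then (BStarHat α H h : ℂ) * (BStarHat α H h' : ℂ)
              * Complex.exp (2*Real.pi*Complex.I*h*x) else 0 := by
        intro h' _
        rw [intervalIntegral.integral_const_mul]
        have hie := int_exp (h' - h)
        push_cast at hie
        rw [hie]
        rcases eq_or_ne h' h with he | he
        · simp [he]
        · simp [sub_eq_zero, he]
      rw [Finset.sum_congr rfl this, Finset.sum_ite_eq' _ h, if_pos hmem, sq]
    · intro h' _
      apply Continuous.intervalIntegrable
      fun_prop
  · intro h _
    apply Continuous.intervalIntegrable
    apply continuous_finset_sum
    intro h' _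
    fun_prop

lemma geom_lemma (U : ℕ) (hU : 0 < U) (h : ℤ) :
    (∑ u ∈ Finset.range U, Complex.exp (2*Real.pi*Complex.I*h*(((u:ℝ)/U : ℝ):ℂ)))
    = if (U:ℤ) ∣ h then (U:ℂ) else 0 := by
  have hUc : ((U:ℂ)) ≠ 0 := Nat.cast_ne_zero.2 hU.ne'
  set z : ℂ := Complex.exp (2*Real.pi*Complex.I*h*(1/(U:ℂ))) with hz
  have hzu : ∀ u : ℕ, Complex.exp (2*Real.pi*Complex.I*h*(((u:ℝ)/U : ℝ):ℂ)) = z ^ u := by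
    intro u
    rw [hz, ← Complex.exp_nat_mul]
    congr 1
    push_cast
    ring
  simp only [hzu]
  rcases em ((U:ℤ) ∣ h) with hdvd | hdvd
  · obtain ⟨k, hk⟩ := hdvd
    have hz1 : z = 1 := by
      rw [hz, hk]
      have : (2*(Real.pi:ℂ)*Complex.I*((U:ℤ)*k : ℤ)*(1/(U:ℂ))) = (k:ℂ) * (2*Real.pi*Complex.I) := by
        push_cast
        field_simp
      rw [this, Complex.exp_int_mul_two_pi_mul_I]
    rw [if_pos ⟨k, hk⟩, hz1]
    simp
  · have hz1 : z ≠ 1 := by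
      intro hz1
      rw [hz, Complex.exp_eq_one_iff] at hz1
      obtain ⟨n, hn⟩ := hz1
      apply hdvd
      refine ⟨n, ?_⟩
      have h2pi : (2*(Real.pi:ℂ)*Complex.I) ≠ 0 := by
        simp [Real.pi_ne_zero, Complex.I_ne_zero]
      field_simp at hn
      have h2 : (2*(Real.pi:ℂ)*Complex.I) * (h:ℂ) = (2*(Real.pi:ℂ)*Complex.I) * ((U:ℂ)*(n:ℂ)) := by
        linear_combination (2*(Real.pi:ℂ)*Complex.I) * hn
      have h3 := mul_left_cancel₀ h2pi h2
      exact_mod_cast h3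
    rw [if_neg hdvd, geom_sum_eq hz1]
    have hzU : z ^ U = 1 := by
      rw [hz, ← Complex.exp_nat_mul]
      have : (U:ℂ) * (2*Real.pi*Complex.I*h*(1/(U:ℂ))) = (h:ℂ) * (2*Real.pi*Complex.I) := by
        field_simp
      rw [this, Complex.exp_int_mul_two_pi_mul_I]
    rw [hzU, sub_self, zero_div]

lemma icc_insert (K : ℕ) :
    Finset.Icc (-((K:ℤ)+1)) ((K:ℤ)+1)
      = insert (-((K:ℤ)+1)) (insert ((K:ℤ)+1) (Finset.Icc (-(K:ℤ)) (K:ℤ))) := by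
  ext x
  simp only [Finset.mem_Icc, Finset.mem_insert]
  omega

lemma even_sum (f : ℤ → ℝ) (hf : ∀ k, f (-k) = f k) (K : ℕ) :
    (∑ k ∈ Finset.Icc (-(K:ℤ)) (K:ℤ), f k)
      = f 0 + 2 * ∑ j ∈ Finset.range K, f ((j:ℤ)+1) := by
  induction K with
  | zero => simp
  | succ K ih =>
    have h1 : ((K+1 : ℕ) : ℤ) = (K:ℤ)+1 := by push_cast; ring
    rw [h1, icc_insert K, Finset.sum_insert, Finset.sum_insert, ih,
      Finset.sum_range_succ, hf ((K:ℤ)+1)]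
    · push_cast; ring
    · simp only [Finset.mem_Icc]; omega
    · simp only [Finset.mem_insert, Finset.mem_Icc]; omega

lemma closed_form (c : ℝ) (K : ℕ) :
    (∑ j ∈ Finset.range K, (1 - ((j:ℝ)+1)*c)^2)
      = K - c*K*(K+1) + c^2*K*(K+1)*(2*K+1)/6 := by
  induction K with
  | zero => simp
  | succ K ih =>
    rw [Finset.sum_range_succ, ih]
    push_cast
    ring

lemma final_ineq (u n k : ℝ) (hu : 2 ≤ u) (hun : u ≤ n) (hk : 0 ≤ k)
    (h1 : k*u + 1 ≤ n) (h2 : n ≤ (k+1)*u) (hkint : k = 0 ∨ 1 ≤ k) :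
    u/n^2 * (1 + 2*(k - (u/n)*k*(k+1) + (u/n)^2*k*(k+1)*(2*k+1)/6)) ≤ 1/n := by
  have hn : (0:ℝ) < n := by linarith
  rw [div_mul_eq_mul_div, div_le_div_iff₀ (by positivity) hn]
  have key : 3*u*n^2 + 6*k*u*n^2 - 6*n*u^2*k*(k+1) + u^3*k*(k+1)*(2*k+1) ≤ 3*n^3 := by
    rcases hkint with hk0 | hk1
    · subst hk0; nlinarith
    · have ha : (0:ℝ) ≤ n - k*u := by nlinarith
      have hb : (0:ℝ) ≤ (k+1)*u - n := by linarith
      have H1 : 0 ≤ k*(k-1)*(k+1)*((k+1)*u-n)^3 :=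
        mul_nonneg (mul_nonneg (mul_nonneg hk (by linarith)) (by linarith)) (pow_nonneg hb 3)
      have H2 : 0 ≤ 3*(n-k*u)^2*((k+1)*u-n)*(2*k^2-1) := by
        have : (0:ℝ) ≤ 2*k^2-1 := by nlinarith
        positivity
      have H3 : 0 ≤ 3*k*(n-k*u)*((k+1)*u-n)^2*(k-1) :=
        mul_nonneg (mul_nonneg (mul_nonneg (by linarith) ha) (sq_nonneg _)) (by linarith)
      have H4 : 0 ≤ 3*k^3*(n-k*u)*((k+1)*u-n)^2 := by positivity
      have H5 : 0 ≤ (2*k + 3*k^2 + k^3)*(n-k*u)^3 := by positivity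
      have H6 : 0 ≤ 3*k^3*(n-k*u)^2*((k+1)*u-n) := by positivity
      nlinarith [H1,H2,H3,H4,H5,H6]
  have hfield : u * (1 + 2*(k - (u/n)*k*(k+1) + (u/n)^2*k*(k+1)*(2*k+1)/6)) * n
      = (3*u*n^2 + 6*k*u*n^2 - 6*n*u^2*k*(k+1) + u^3*k*(k+1)*(2*k+1))/(3*n) := by
    field_simp
    ring
  rw [hfield, one_mul, div_le_iff₀ (by positivity)]
  nlinarith [key]

lemma term_eq (U H : ℕ) (hU : 0 < U) (k : ℤ) :
    (U:ℝ) * (BStarHat (1/(U:ℝ)) H (k*U))^2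
      = (U:ℝ)/((H:ℝ)+1)^2 * (1 - |(k:ℝ)| * ((U:ℝ)/((H:ℝ)+1)))^2 := by
  have hUr : ((U:ℝ)) ≠ 0 := Nat.cast_ne_zero.2 hU.ne'
  have hn : ((H:ℝ)+1) ≠ 0 := by positivity
  rw [BStarHat]
  have harg : Real.pi * ((k*U : ℤ):ℝ) * (1/(U:ℝ)) = (k:ℝ) * Real.pi := by
    push_cast; field_simp
  rw [harg]
  have hcos : Real.cos ((k:ℝ) * Real.pi) ^ 2 = 1 := by
    rw [← _root_.sq_abs, Real.abs_cos_int_mul_pi, one_pow]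
  have habs : |((k*U : ℤ):ℝ)| = |(k:ℝ)| * (U:ℝ) := by
    push_cast [abs_mul]
    rw [_root_.abs_of_nonneg (by positivity : (0:ℝ) ≤ (U:ℝ))]
  rw [habs]
  rw [mul_pow, mul_pow, hcos, mul_one]
  field_simp

lemma real_side (U H : ℕ) (hU : 2 ≤ U) (hH : U ≤ H + 1) :
    (∑ h ∈ (Finset.Icc (-(H:ℤ)) (H:ℤ)).filter (fun h => (U:ℤ) ∣ h),
      (U:ℝ) * (BStarHat (1/(U:ℝ)) H h)^2) ≤ 1/((H:ℝ)+1) := by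
  have hU0 : 0 < U := by omega
  have hUz : ((U:ℤ)) ≠ 0 := by exact_mod_cast hU0.ne'
  have hUzpos : (0:ℤ) < (U:ℤ) := by exact_mod_cast hU0
  set K : ℕ := H / U with hK
  have hKcast : ((K:ℕ):ℤ) = (H:ℤ)/(U:ℤ) := by exact_mod_cast Int.natCast_div H U
  set n : ℝ := (H:ℝ)+1 with hn
  have hn0 : (0:ℝ) < n := by positivity
  set c : ℝ := (U:ℝ)/n with hc
  -- reindex
  have step1 : (∑ h ∈ (Finset.Icc (-(H:ℤ)) (H:ℤ)).filter (fun h => (U:ℤ) ∣ h),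
      (U:ℝ) * (BStarHat (1/(U:ℝ)) H h)^2)
      = ∑ k ∈ Finset.Icc (-(K:ℤ)) (K:ℤ), (U:ℝ)/n^2 * (1 - |(k:ℝ)| * c)^2 := by
    refine Finset.sum_nbij' (fun h => h / (U:ℤ)) (fun k => k * (U:ℤ)) ?_ ?_ ?_ ?_ ?_
    · intro h hmem
      simp only [Finset.mem_filter, Finset.mem_Icc] at hmem
      obtain ⟨⟨h1, h2⟩, m, rfl⟩ := hmem
      beta_reduce
      rw [Int.mul_ediv_cancel_left m hUz]
      simp only [Finset.mem_Icc, hKcast]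
      constructor
      · rw [neg_le, ← neg_neg ((H:ℤ)), neg_le_neg_iff] at h1
        rw [neg_le, Int.le_ediv_iff_mul_le hUzpos]
        linarith [h1]
      · rw [Int.le_ediv_iff_mul_le hUzpos]
        linarith [h2]
    · intro k hmem
      simp only [Finset.mem_Icc, hKcast] at hmem
      obtain ⟨h1, h2⟩ := hmem
      rw [Int.le_ediv_iff_mul_le hUzpos] at h2
      rw [neg_le, Int.le_ediv_iff_mul_le hUzpos] at h1
      simp only [Finset.mem_filter, Finset.mem_Icc]
      exact ⟨⟨by linarith [h1], by linarith [h2]⟩, Dvd.intro_left k rfl⟩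
    · intro h hmem
      simp only [Finset.mem_filter] at hmem
      exact Int.ediv_mul_cancel hmem.2
    · intro k _
      exact Int.mul_ediv_cancel k hUz
    · intro h hmem
      simp only [Finset.mem_filter, Finset.mem_Icc] at hmem
      obtain ⟨⟨h1, h2⟩, m, rfl⟩ := hmem
      beta_reduce
      rw [Int.mul_ediv_cancel_left m hUz, mul_comm ((U:ℤ)) m]
      exact term_eq U H hU0 m
  rw [step1]
  -- even sum
  have hf : ∀ k : ℤ, (U:ℝ)/n^2 * (1 - |((-k : ℤ):ℝ)| * c)^2
      = (U:ℝ)/n^2 * (1 - |(k:ℝ)| * c)^2 := by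
    intro k; push_cast; rw [abs_neg]
  rw [even_sum _ hf K]
  have h0 : ((0:ℤ):ℝ) = 0 := by norm_num
  have hstep : ∀ j : ℕ, (U:ℝ)/n^2 * (1 - |(((j:ℤ)+1 : ℤ):ℝ)| * c)^2
      = (U:ℝ)/n^2 * (1 - ((j:ℝ)+1) * c)^2 := by
    intro j
    congr 2
    rw [_root_.abs_of_nonneg (by push_cast; positivity : (0:ℝ) ≤ (((j:ℤ)+1 : ℤ):ℝ))]
    push_cast; ring
  calc ((U:ℝ)/n^2 * (1 - |((0:ℤ):ℝ)| * c)^2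
        + 2 * ∑ j ∈ Finset.range K, (U:ℝ)/n^2 * (1 - |(((j:ℤ)+1:ℤ):ℝ)| * c)^2)
      = (U:ℝ)/n^2 * (1 + 2 * ∑ j ∈ Finset.range K, (1 - ((j:ℝ)+1) * c)^2) := by
        simp only [hstep]
        rw [← Finset.mul_sum]
        simp only [Int.cast_zero, abs_zero, zero_mul, sub_zero, one_pow, mul_one]
        ring
    _ ≤ 1/n := by
        rw [closed_form c K]
        have hc' : c = (U:ℝ)/n := hc
        have hKU1 : (K:ℝ) * (U:ℝ) + 1 ≤ n := by
          have : K * U ≤ H := Nat.div_mul_le_self H U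
          rw [hn]; exact_mod_cast Nat.succ_le_succ this
        have hKU2 : n ≤ ((K:ℝ)+1) * (U:ℝ) := by
          have h3 : H < (K+1) * U := by
            have e1 := Nat.div_add_mod H U
            have e2 := Nat.mod_lt H hU0
            calc H = U*(H/U) + H%U := e1.symm
              _ < U*(H/U) + U := by omega
              _ = (K+1)*U := by rw [hK]; ring
          rw [hn]
          exact_mod_cast Nat.succ_le_of_lt h3
        have hint : (K:ℝ) = 0 ∨ 1 ≤ (K:ℝ) := by
          rcases Nat.eq_zero_or_pos K with h | h
          · left; rw [h]; norm_num
          · right; exact_mod_cast h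
        have := final_ineq (U:ℝ) n (K:ℝ) (by exact_mod_cast hU)
          (by rw [hn]; exact_mod_cast hH) (by positivity) hKU1 hKU2 hint
        rw [hc']
        convert this using 3

/-- For `2 ≤ U ≤ H+1` and `α = 1/U`,
`Σ_{0≤u<U} (B*_{α,H} ∗ B*_{α,H})(u/U) ≤ 1/(H+1)` (the sum is a real number). -/
theorem BStar_convolution_BStar_sum (U H : ℕ) (hU : 2 ≤ U) (hH : U ≤ H + 1) :
    ∑ u ∈ Finset.range U,
      (∫ t in (-(1 / 2) : ℝ)..(1 / 2), BStar (1 / U) H ((u : ℝ) / U - t) * BStar (1 / U) H t)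
      ≤ 1 / ((H : ℂ) + 1) := by
  have hU0 : 0 < U := by omega
  have key : (∑ u ∈ Finset.range U,
      (∫ t in (-(1 / 2) : ℝ)..(1 / 2), BStar (1 / U) H ((u : ℝ) / U - t) * BStar (1 / U) H t))
      = (((∑ h ∈ (Finset.Icc (-(H:ℤ)) (H:ℤ)).filter (fun h => (U:ℤ) ∣ h),
          (U:ℝ) * (BStarHat (1/(U:ℝ)) H h)^2 : ℝ)) : ℂ) := by
    calc (∑ u ∈ Finset.range U,
        (∫ t in (-(1 / 2) : ℝ)..(1 / 2), BStar (1 / U) H ((u : ℝ) / U - t) * BStar (1 / U) H t))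
        = ∑ u ∈ Finset.range U, ∑ h ∈ Finset.Icc (-(H:ℤ)) (H:ℤ),
            ((BStarHat (1/(U:ℝ)) H h : ℂ))^2 * Complex.exp (2*Real.pi*Complex.I*h*(((u:ℝ)/U : ℝ):ℂ)) :=
          Finset.sum_congr rfl fun u _ => conv_eq (1/(U:ℝ)) H ((u:ℝ)/U)
      _ = ∑ h ∈ Finset.Icc (-(H:ℤ)) (H:ℤ), ∑ u ∈ Finset.range U,
            ((BStarHat (1/(U:ℝ)) H h : ℂ))^2 * Complex.exp (2*Real.pi*Complex.I*h*(((u:ℝ)/U : ℝ):ℂ)) :=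
          Finset.sum_comm
      _ = ∑ h ∈ Finset.Icc (-(H:ℤ)) (H:ℤ),
            ((BStarHat (1/(U:ℝ)) H h : ℂ))^2 * (if (U:ℤ) ∣ h then (U:ℂ) else 0) := by
          refine Finset.sum_congr rfl fun h _ => ?_
          rw [← Finset.mul_sum, geom_lemma U hU0 h]
      _ = ∑ h ∈ (Finset.Icc (-(H:ℤ)) (H:ℤ)).filter (fun h => (U:ℤ) ∣ h),
            (U:ℂ) * ((BStarHat (1/(U:ℝ)) H h : ℂ))^2 := by
          rw [Finset.sum_filter]
          refine Finset.sum_congr rfl fun h _ => ?_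
          rcases em ((U:ℤ) ∣ h) with hd | hd
          · simp [hd, mul_comm]
          · simp [hd]
      _ = (((∑ h ∈ (Finset.Icc (-(H:ℤ)) (H:ℤ)).filter (fun h => (U:ℤ) ∣ h),
          (U:ℝ) * (BStarHat (1/(U:ℝ)) H h)^2 : ℝ)) : ℂ) := by
          push_cast
          rfl
  rw [key]
  have hreal := real_side U H hU hH
  have : (((∑ h ∈ (Finset.Icc (-(H:ℤ)) (H:ℤ)).filter (fun h => (U:ℤ) ∣ h),
      (U:ℝ) * (BStarHat (1/(U:ℝ)) H h)^2 : ℝ)) : ℂ) ≤ ((1/((H:ℝ)+1) : ℝ) : ℂ) := by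
    exact_mod_cast Complex.real_le_real.2 hreal
  convert this using 2
  push_cast
  ring
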